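/- Every infinite (possibly nonunital) ring R has infinitely many subrings generated by one element, i.e., the set {S : S is a subring of R and S = ⟨a⟩ for some a ∈ R} is infinite. -/

import Mathlib

namespace OneGen
variable {R : Type*} [NonUnitalRing R]

/-- `pw a n = a^(n+1)` in a nonunital ring. -/
def pw (a : R) : ℕ → R
  | 0 => a
  | n+1 => pw a n * a

@[simp] lemma pw_zero (a : R) : pw a 0 = a := rfl
lemma pw_succ (a : R) (n : ℕ) : pw a (n+1) = pw a n * a := rfl

lemma pw_add (a : R) (m n : ℕ) : pw a (m + n + 1) = pw a m * pw a n := by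
  induction n with
  | zero => rfl
  | succ n ih => rw [show m + (n+1) + 1 = (m + n + 1) + 1 by ring, pw_succ, ih, pw_succ, mul_assoc]

lemma pw_succ' (a : R) (n : ℕ) : pw a (n+1) = a * pw a n := by
  have := pw_add a 0 n
  simpa using this

lemma pw_comm (a : R) (m n : ℕ) : pw a m * pw a n = pw a n * pw a m := by
  rw [← pw_add, ← pw_add, Nat.add_comm m n]

lemma pw_pw (a : R) (s j : ℕ) : pw (pw a s) j = pw a ((s+1) * (j+1) - 1) := by
  induction j with
  | zero => simp [Nat.mul_one]
  | succ j ih =>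
      rw [pw_succ, ih]
      have h1 : (s+1) * (j+1) - 1 + s + 1 = (s+1)*(j+2) - 1 := by
        have : 1 ≤ (s+1)*(j+1) := Nat.one_le_iff_ne_zero.2 (by positivity)
        have e2 : (s+1)*(j+2) = (s+1)*(j+1) + (s+1) := by ring
        omega
      rw [← h1, pw_add]

/-- The ℤ-span of the positive powers of `a`; this is `⟨a⟩` as a set. -/
def sp (a : R) : Submodule ℤ R := Submodule.span ℤ (Set.range (pw a))

lemma pw_mem_sp (a : R) (n : ℕ) : pw a n ∈ sp a :=
  Submodule.subset_span ⟨n, rfl⟩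

lemma self_mem_sp (a : R) : a ∈ sp a := pw_mem_sp a 0

lemma mem_sp_iff {a x : R} : x ∈ sp a ↔ ∃ f : ℕ →₀ ℤ, (f.sum fun i k => k • pw a i) = x :=
  Finsupp.mem_span_range_iff_exists_finsupp

/-- elements of `sp a` commute with `a`-powers -/
lemma sp_comm_pw {a x : R} (hx : x ∈ sp a) (n : ℕ) : x * pw a n = pw a n * x := by
  induction hx using Submodule.span_induction with
  | mem y hy => obtain ⟨m, rfl⟩ := hy; exact pw_comm a m n
  | zero => simp
  | add y z _ _ hy hz => rw [add_mul, mul_add, hy, hz]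
  | smul k y _ hy => rw [smul_mul_assoc, mul_smul_comm, hy]

lemma sp_comm {a x y : R} (hx : x ∈ sp a) (hy : y ∈ sp a) : x * y = y * x := by
  induction hy using Submodule.span_induction with
  | mem z hz => obtain ⟨m, rfl⟩ := hz; exact sp_comm_pw hx m
  | zero => simp
  | add y z _ _ h1 h2 => rw [mul_add, add_mul, h1, h2]
  | smul k y _ h1 => rw [smul_mul_assoc, mul_smul_comm, h1]

lemma sp_mul_mem {a x y : R} (hx : x ∈ sp a) (hy : y ∈ sp a) : x * y ∈ sp a := by
  induction hx using Submodule.span_induction with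
  | mem z hz =>
      obtain ⟨m, rfl⟩ := hz
      induction hy using Submodule.span_induction with
      | mem w hw => obtain ⟨n, rfl⟩ := hw; exact (pw_add a m n) ▸ pw_mem_sp a (m+n+1)
      | zero => rw [mul_zero]; exact (sp a).zero_mem
      | add y z _ _ h1 h2 => rw [mul_add]; exact add_mem h1 h2
      | smul k y _ h1 => rw [mul_smul_comm]; exact Submodule.smul_mem _ k h1
  | zero => rw [zero_mul]; exact (sp a).zero_mem
  | add y z _ _ h1 h2 => rw [add_mul]; exact add_mem h1 h2
  | smul k y _ h1 => rw [smul_mul_assoc]; exact Submodule.smul_mem _ k h1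

/-- the subring generated by `a` is exactly the span of positive powers. -/
lemma closure_eq_sp (a : R) : (NonUnitalSubring.closure {a} : Set R) = (sp a : Set R) := by
  apply le_antisymm
  · have : NonUnitalSubring.closure {a} ≤
        { carrier := (sp a : Set R)
          add_mem' := fun h1 h2 => add_mem h1 h2
          zero_mem' := (sp a).zero_mem
          mul_mem' := fun h1 h2 => sp_mul_mem h1 h2
          neg_mem' := fun h1 => neg_mem h1 } :=
      NonUnitalSubring.closure_le.2 (Set.singleton_subset_iff.2 (self_mem_sp a))
    exact this
  · have hpw : ∀ n, pw a n ∈ NonUnitalSubring.closure {a} := by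
      intro n
      induction n with
      | zero => exact NonUnitalSubring.subset_closure rfl
      | succ n ih => exact mul_mem ih (NonUnitalSubring.subset_closure rfl)
    have : sp a ≤
        { carrier := (NonUnitalSubring.closure {a} : Set R)
          add_mem' := fun h1 h2 => add_mem h1 h2
          zero_mem' := zero_mem _
          smul_mem' := fun k x hx => zsmul_mem hx k } := by
      apply Submodule.span_le.2
      rintro x ⟨n, rfl⟩
      exact hpw n
    exact this


variable {R : Type*} [NonUnitalRing R]

lemma finite_sup {p q : Submodule ℤ R} (hp : (p : Set R).Finite) (hq : (q : Set R).Finite) :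
    ((p ⊔ q : Submodule ℤ R) : Set R).Finite := by
  apply Set.Finite.subset (Set.Finite.image2 (· + ·) hp hq)
  intro x hx
  obtain ⟨y, hy, z, hz, rfl⟩ := Submodule.mem_sup.1 hx
  exact Set.mem_image2_of_mem hy hz

lemma finite_span_singleton_torsion {g : R} {n : ℕ} (hn : 0 < n) (hg : (n:ℤ) • g = 0) :
    ((Submodule.span ℤ {g} : Submodule ℤ R) : Set R).Finite := by
  apply Set.Finite.subset ((Set.finite_Iio n).image (fun k : ℕ => (k:ℤ) • g))
  intro x hx
  obtain ⟨k, rfl⟩ := Submodule.mem_span_singleton.1 hx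
  refine ⟨(k % (n:ℤ)).toNat, ?_, ?_⟩
  · have h1 : 0 ≤ k % (n:ℤ) := Int.emod_nonneg k (by exact_mod_cast hn.ne')
    have h2 : k % (n:ℤ) < n := Int.emod_lt_of_pos k (by exact_mod_cast hn)
    simp only [Set.mem_Iio]
    omega
  · have h1 : 0 ≤ k % (n:ℤ) := Int.emod_nonneg k (by exact_mod_cast hn.ne')
    show ((((k % (n:ℤ)).toNat : ℕ) : ℤ)) • g = k • g
    rw [Int.toNat_of_nonneg h1]
    have : k = (n:ℤ) * (k / n) + k % n := (Int.mul_ediv_add_emod k n).symm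
    calc (k % (n:ℤ)) • g = (k % (n:ℤ)) • g + (k / n) • ((n:ℤ) • g) := by rw [hg, smul_zero, add_zero]
    _ = k • g := by rw [smul_smul, ← add_smul, Int.emod_add_ediv_mul k n]

lemma finite_span_torsion (s : Finset R)
    (h : ∀ g ∈ s, ∃ n : ℕ, 0 < n ∧ (n:ℤ) • g = 0) :
    ((Submodule.span ℤ (s : Set R) : Submodule ℤ R) : Set R).Finite := by
  classical
  induction s using Finset.induction_on with
  | empty => simp
  | @insert g s hg ih =>
      rw [Finset.coe_insert, Submodule.span_insert]
      obtain ⟨n, hn, hng⟩ := h g (Finset.mem_insert_self g s)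
      exact finite_sup (finite_span_singleton_torsion hn hng)
        (ih fun g' hg' => h g' (Finset.mem_insert_of_mem hg'))


variable {R : Type*} [NonUnitalRing R]
def spt (a : R) (s : ℕ) : Submodule ℤ R := Submodule.span ℤ (Set.range fun i => pw a (i+s))

lemma spt_zero (a : R) : spt a 0 = sp a := rfl

lemma pw_mem_spt (a : R) {i s : ℕ} (h : s ≤ i) : pw a i ∈ spt a s :=
  Submodule.subset_span ⟨i - s, by simp only []; rw [Nat.sub_add_cancel h]⟩

lemma pw_smul (c : R) (k : ℤ) (i : ℕ) : pw (k • c) i = (k^(i+1)) • pw c i := by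
  induction i with
  | zero => simp [pw]
  | succ i ih =>
      show pw (k • c) i * (k • c) = _
      rw [ih, smul_mul_assoc, mul_smul_comm, smul_smul, ← pow_succ]
      rfl

lemma sp_smul_le (c : R) (k : ℤ) :
    sp (k • c) ≤ Submodule.span ℤ {k • c} ⊔ spt c 1 := by
  apply Submodule.span_le.2
  rintro x ⟨i, rfl⟩
  cases i with
  | zero => exact Submodule.mem_sup_left (Submodule.subset_span rfl)
  | succ i =>
      apply Submodule.mem_sup_right
      rw [pw_smul]
      exact Submodule.smul_mem _ _ (pw_mem_spt c (by omega))




-- case A: if no positive multiple of c lies in spt c 1, we get infinitely many subrings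
lemma caseA (c : R) (hne : ∀ m : ℕ, 0 < m → ((m:ℤ)) • c ∉ spt c 1) :
    {S : NonUnitalSubring R | ∃ a : R, S = NonUnitalSubring.closure {a}}.Infinite := by
  have hzero : ∀ k : ℤ, k • c ∈ spt c 1 → k = 0 := by
    intro k hk
    rcases lt_trichotomy k 0 with h | h | h
    · have : ((-k).toNat : ℤ) • c ∈ spt c 1 := by
        rw [show ((-k).toNat : ℤ) = -k by omega]
        simpa using (spt c 1).neg_mem hk
      exact absurd this (hne _ (by omega))
    · exact h
    · have : ((k.toNat : ℤ)) • c ∈ spt c 1 := by rw [show ((k.toNat : ℤ)) = k by omega]; exact hk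
      exact absurd this (hne _ (by omega))
  have key : ∀ n n' : ℕ,
      NonUnitalSubring.closure {((n+1 : ℕ):ℤ) • c} = NonUnitalSubring.closure {((n'+1 : ℕ):ℤ) • c} →
      ((n+1 : ℕ):ℤ) ∣ ((n'+1 : ℕ):ℤ) := by
    intro n n' h
    have hmem : ((n'+1 : ℕ):ℤ) • c ∈ sp (((n+1 : ℕ):ℤ) • c) := by
      have h1 : ((n'+1 : ℕ):ℤ) • c ∈ (NonUnitalSubring.closure {((n'+1 : ℕ):ℤ) • c} : Set R) :=
        NonUnitalSubring.subset_closure rfl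
      rw [← h, closure_eq_sp] at h1
      exact h1
    have h2 := sp_smul_le c ((n+1 : ℕ):ℤ) hmem
    obtain ⟨y, hy, z, hz, hyz⟩ := Submodule.mem_sup.1 h2
    obtain ⟨j, rfl⟩ := Submodule.mem_span_singleton.1 hy
    have h3 : (((n'+1 : ℕ):ℤ) - j * ((n+1 : ℕ):ℤ)) • c ∈ spt c 1 := by
      rw [sub_smul, mul_smul]
      rw [← hyz]
      simpa using hz
    have := hzero _ h3
    exact ⟨j, by linarith [this]⟩
  apply Set.infinite_of_injective_forall_mem
    (f := fun n : ℕ => NonUnitalSubring.closure {((n+1 : ℕ):ℤ) • c})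
  case hf => intro n; exact ⟨((n+1 : ℕ):ℤ) • c, rfl⟩
  case hi =>
    intro n n' h
    have d1 := key n n' h
    have d2 := key n' n h.symm
    have := Int.dvd_antisymm (by positivity) (by positivity) d1 d2
    omega

lemma spt_mono (a : R) {s s' : ℕ} (h : s ≤ s') : spt a s' ≤ spt a s := by
  apply Submodule.span_le.2
  rintro x ⟨i, rfl⟩
  exact pw_mem_spt a (by omega)

lemma pw_mul_spt {a x : R} {s r : ℕ} (hx : x ∈ spt a s) :
    pw a r * x ∈ spt a (r + s + 1) := by
  induction hx using Submodule.span_induction with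
  | mem y hy =>
      obtain ⟨i, rfl⟩ := hy
      rw [show pw a r * pw a (i + s) = pw a (r + (i+s) + 1) from (pw_add a r (i+s)).symm]
      exact pw_mem_spt a (by omega)
  | zero => rw [mul_zero]; exact zero_mem _
  | add y z _ _ h1 h2 => rw [mul_add]; exact add_mem h1 h2
  | smul k y _ h1 => rw [mul_smul_comm]; exact Submodule.smul_mem _ k h1

/-- nilpotent + torsion implies finite span -/
lemma nt_finite (d : R) (J : ℕ) (hJ : ∀ j, J ≤ j → pw d j = 0)
    (m : ℕ) (hm : 0 < m) (hmd : (m:ℤ) • d ∈ spt d 1) :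
    ((sp d : Submodule ℤ R) : Set R).Finite := by
  -- step 1 : m • (spt d s) ⊆ spt d (s+1)
  have step1 : ∀ s : ℕ, ∀ x ∈ spt d s, (m:ℤ) • x ∈ spt d (s+1) := by
    intro s x hx
    induction hx using Submodule.span_induction with
    | mem y hy =>
        obtain ⟨i, rfl⟩ := hy
        show (m:ℤ) • pw d (i + s) ∈ spt d (s+1)
        rcases Nat.eq_zero_or_pos (i + s) with h0 | h0
        · have hi : i = 0 := by omega
          have hs : s = 0 := by omega
          subst hi; subst hs
          simpa using hmd
        · have : pw d (i + s) = pw d (i + s - 1) * d := by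
            rcases Nat.exists_eq_add_of_le h0 with ⟨j, hj⟩
            have : i + s = j + 1 := by omega
            rw [this]; rfl
          rw [this, ← mul_smul_comm]
          have := pw_mul_spt (a := d) (r := i + s - 1) (s := 1)
            (x := (m:ℤ) • d) (by simpa using hmd)
          exact spt_mono d (by omega) this
    | zero => rw [smul_zero]; exact zero_mem _
    | add y z _ _ h1 h2 => rw [smul_add]; exact add_mem h1 h2
    | smul k y _ h1 => rw [smul_comm]; exact Submodule.smul_mem _ k h1
  -- step 2 : m^i • x ∈ spt d (s+i)
  have step2 : ∀ i s : ℕ, ∀ x ∈ spt d s, ((m:ℤ)^i) • x ∈ spt d (s+i) := by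
    intro i
    induction i with
    | zero => intro s x hx; simpa using hx
    | succ i ih =>
        intro s x hx
        have h1 := step1 s x hx
        have h2 := ih (s+1) _ h1
        rw [smul_smul] at h2
        rw [show (m:ℤ)^(i+1) = (m:ℤ)^i * m by ring, show s + (i+1) = s + 1 + i by omega]
        exact h2
  have sptJ : ∀ s, J ≤ s → spt d s = ⊥ := by
    intro s hs
    apply le_antisymm _ bot_le
    apply Submodule.span_le.2
    rintro x ⟨i, rfl⟩
    show pw d (i+s) ∈ (⊥ : Submodule ℤ R)
    rw [hJ (i+s) (by omega)]
    exact Submodule.zero_mem ⊥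
  have step3 : ∀ j, ((m:ℤ)^J) • pw d j = 0 := by
    intro j
    have h1 := step2 J j (pw d j) (pw_mem_spt d le_rfl)
    rw [sptJ (j + J) (by omega)] at h1
    simpa using h1
  -- conclude
  classical
  have hle : sp d ≤ Submodule.span ℤ ((Finset.image (pw d) (Finset.range J) : Finset R) : Set R) := by
    apply Submodule.span_le.2
    rintro x ⟨j, rfl⟩
    by_cases hj : j < J
    · exact Submodule.subset_span (by simp; exact ⟨j, hj, rfl⟩)
    · rw [hJ j (by omega)]; exact zero_mem _
  apply Set.Finite.subset _ hle
  apply finite_span_torsion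
  intro g hg
  simp only [Finset.mem_image, Finset.mem_range] at hg
  obtain ⟨j, _, rfl⟩ := hg
  exact ⟨m^J, pow_pos hm J, by rw [Nat.cast_pow]; exact step3 j⟩

lemma mi (w : ℕ → R) (hw : ∀ i j, w i * w j = w (i+j)) :
    ∀ χ : ℕ, 0 < χ → ∀ m₀ : R, (χ:ℤ) • m₀ = 0 →
    (∀ p : ℕ, p.Prime → p ∣ χ →
      ∃ f : ℕ →₀ ℤ, (∃ j, ¬ (p:ℤ) ∣ f j) ∧ (f.sum fun j k => k • (w j * m₀)) = 0) →
    ((Submodule.span ℤ (Set.range fun j => w j * m₀) : Submodule ℤ R) : Set R).Finite := by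
  intro χ
  induction χ using Nat.strong_induction_on with
  | _ χ IH =>
    intro hχ m₀ hm₀ H
    classical
    rcases eq_or_ne χ 1 with rfl | hχ1
    · -- m₀ = 0
      have h0 : m₀ = 0 := by simpa using hm₀
      subst h0
      have : (Submodule.span ℤ (Set.range fun j => w j * (0:R)) : Submodule ℤ R) ≤ ⊥ := by
        apply Submodule.span_le.2
        rintro x ⟨j, rfl⟩
        simp
      exact Set.Finite.subset (Set.finite_singleton 0) (by intro x hx; simpa using this hx)
    · set p := χ.minFac with hp_def
      have hp : p.Prime := Nat.minFac_prime hχ1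
      have hpd : p ∣ χ := Nat.minFac_dvd χ
      obtain ⟨f, ⟨j₀, hj₀⟩, hf⟩ := H p hp hpd
      -- maximal index with coefficient not divisible by p
      set s0 := f.support.filter (fun j => ¬ (p:ℤ) ∣ f j) with hs0
      have hs0ne : s0.Nonempty := by
        refine ⟨j₀, ?_⟩
        rw [hs0, Finset.mem_filter]
        refine ⟨Finsupp.mem_support_iff.2 ?_, hj₀⟩
        intro h; rw [h] at hj₀; exact hj₀ (dvd_zero _)
      set d := s0.max' hs0ne with hd_def
      have hd : ¬ (p:ℤ) ∣ f d := (Finset.mem_filter.1 (s0.max'_mem hs0ne)).2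
      have hgt : ∀ j, d < j → (p:ℤ) ∣ f j := by
        intro j hj
        by_contra hnd
        rcases eq_or_ne (f j) 0 with h0 | h0
        · rw [h0] at hnd; exact hnd (dvd_zero _)
        · have : j ∈ s0 := Finset.mem_filter.2 ⟨Finsupp.mem_support_iff.2 h0, hnd⟩
          exact absurd (s0.le_max' j this) (by omega)
      -- coprime: k * (f d) = 1 + r * p
      obtain ⟨a, b, hab⟩ := ((Nat.prime_iff_prime_int.1 hp).coprime_iff_not_dvd).2 hd
      -- submodules
      set Mp : Submodule ℤ R := Submodule.span ℤ (Set.range fun j => w j * ((p:ℤ) • m₀)) with hMp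
      set G0 : Submodule ℤ R :=
        Submodule.span ℤ ((Finset.image (fun i => w i * m₀) (Finset.range d) : Finset R) : Set R)
        with hG0
      set W : Submodule ℤ R := G0 ⊔ Mp with hW
      -- shifted relations
      have hshift : ∀ s : ℕ, (f.sum fun j k => k • (w (j+s) * m₀)) = 0 := by
        intro s
        have := congrArg (fun z => w s * z) hf
        simp only [mul_zero] at this
        rw [Finsupp.mul_sum] at this
        rw [← this]
        apply Finsupp.sum_congr
        intro j _
        rw [mul_smul_comm, ← mul_assoc, hw s j, Nat.add_comm s j]
      -- main claim
      have main : ∀ j, w j * m₀ ∈ W := by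
        intro j
        induction j using Nat.strong_induction_on with
        | _ j IHj =>
          by_cases hjd : j < d
          · apply Submodule.mem_sup_left
            apply Submodule.subset_span
            simp only [Finset.coe_image, Finset.coe_range, Set.mem_image, Set.mem_Iio]
            exact ⟨j, hjd, rfl⟩
          · push_neg at hjd
            set s := j - d with hs
            have hds : d + s = j := by omega
            have hrel := hshift s
            -- split off the d term
            have hsplit : (f.sum fun j' k => k • (w (j'+s) * m₀))
                = f d • (w (d+s) * m₀) + ((f.erase d).sum fun j' k => k • (w (j'+s) * m₀)) := by
              conv_lhs => rw [← Finsupp.single_add_erase d f]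
              rw [Finsupp.sum_add_index (by intro a _; simp) (by intro a _ b1 b2; rw [add_smul])]
              congr 1
              rw [Finsupp.sum_single_index (by simp)]
            have hc : f d • (w j * m₀) = - ((f.erase d).sum fun j' k => k • (w (j'+s) * m₀)) := by
              rw [← hds]
              exact eq_neg_of_add_eq_zero_left (hsplit.symm.trans hrel)
            have hrest : ((f.erase d).sum fun j' k => k • (w (j'+s) * m₀)) ∈ W := by
              rw [Finsupp.sum]
              apply Submodule.sum_mem
              intro j' hj'
              rcases lt_trichotomy j' d with h | h | h
              · exact Submodule.smul_mem _ _ (IHj (j'+s) (by omega))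
              · exfalso
                rw [h] at hj'
                simp [Finsupp.support_erase] at hj'
              · obtain ⟨q, hq⟩ := hgt j' h
                have heq : (f.erase d) j' • (w (j'+s) * m₀)
                    = q • (w (j'+s) * ((p:ℤ) • m₀)) := by
                  have hmc : w (j'+s) * ((p:ℤ) • m₀) = (p:ℤ) • (w (j'+s) * m₀) :=
                    mul_smul_comm _ _ _
                  rw [Finsupp.erase_ne (by omega : j' ≠ d), hq, hmc, smul_smul, mul_comm q (p:ℤ)]
                rw [heq]
                exact Submodule.smul_mem _ _
                  (Submodule.mem_sup_right (Submodule.subset_span ⟨j'+s, rfl⟩))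
            have h1 : (1:ℤ) • (w j * m₀) ∈ W := by
              rw [← hab, add_smul]
              apply add_mem
              · rw [mul_smul]
                apply Submodule.smul_mem
                rw [← mul_smul_comm]
                exact Submodule.mem_sup_right (Submodule.subset_span ⟨j, rfl⟩)
              · rw [mul_smul]
                apply Submodule.smul_mem
                rw [hc]
                exact neg_mem hrest
            simpa using h1
      have hM : Submodule.span ℤ (Set.range fun j => w j * m₀) ≤ W := by
        apply Submodule.span_le.2
        rintro x ⟨j, rfl⟩
        exact main j
      obtain ⟨χ', hχ'⟩ := hpd
      have hχ'pos : 0 < χ' := by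
        rcases Nat.eq_zero_or_pos χ' with h | h
        · subst h; omega
        · exact h
      have hχ'lt : χ' < χ := by
        have h2 := hp.two_le
        rcases Nat.lt_or_ge χ' χ with h | h
        · exact h
        · exfalso; nlinarith
      have hMp_fin : (Mp : Set R).Finite := by
        apply IH χ' hχ'lt hχ'pos ((p:ℤ) • m₀)
        · rw [smul_smul, ← Nat.cast_mul, mul_comm χ' p, ← hχ']
          exact hm₀
        · intro p' hp' hp'd
          obtain ⟨f', hj', hf'⟩ := H p' hp' (hχ' ▸ Dvd.dvd.mul_left hp'd p)
          refine ⟨f', hj', ?_⟩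
          have : (f'.sum fun j k => k • (w j * ((p:ℤ) • m₀)))
              = (p:ℤ) • (f'.sum fun j k => k • (w j * m₀)) := by
            rw [Finsupp.smul_sum]
            apply Finsupp.sum_congr
            intro j _
            rw [mul_smul_comm, smul_comm]
          rw [this, hf', smul_zero]
      have hG0_fin : (G0 : Set R).Finite := by
        apply finite_span_torsion
        intro g hg
        simp only [Finset.mem_image, Finset.mem_range] at hg
        obtain ⟨i, _, rfl⟩ := hg
        exact ⟨χ, hχ, by rw [← mul_smul_comm, hm₀, mul_zero]⟩
      exact Set.Finite.subset (finite_sup hG0_fin hMp_fin) (fun x hx => hM hx)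

/-- span of powers of a power is contained in span of powers -/
lemma sp_pw_le (a : R) (s : ℕ) : sp (pw a s) ≤ sp a := by
  apply Submodule.span_le.2
  rintro x ⟨i, rfl⟩
  rw [pw_pw]
  exact pw_mem_sp a _

/-- multiplication on the left as a ℤ-linear map -/
def mulL (x : R) : R →ₗ[ℤ] R where
  toFun y := x * y
  map_add' := mul_add x
  map_smul' k y := mul_smul_comm k x y

/-- extract a local unit from b ∈ ⟨b²⟩ -/
lemma exists_unit (b : R) (h2 : b ∈ sp (pw b 1)) : ∃ u ∈ sp b, b * u = b := by
  have hmap : sp (pw b 1) ≤ Submodule.map (mulL b) (sp b) := by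
    apply Submodule.span_le.2
    rintro x ⟨i, rfl⟩
    refine ⟨pw b (2*i), pw_mem_sp b _, ?_⟩
    show b * pw b (2*i) = pw (pw b 1) i
    rw [pw_pw]
    have h3 : (1+1) * (i+1) - 1 = 0 + 2*i + 1 := by omega
    rw [h3, pw_add, pw_zero]
  obtain ⟨u, hu, hub⟩ := hmap h2
  exact ⟨u, hu, hub⟩

lemma caseB (hfin : {S : NonUnitalSubring R | ∃ a : R, S = NonUnitalSubring.closure {a}}.Finite)
    (c : R) (hc : ((sp c : Submodule ℤ R) : Set R).Infinite)
    (m : ℕ) (hm : 0 < m) (hmc : (m:ℤ) • c ∈ spt c 1) : False := by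
  classical
  set 𝒮 := {S : NonUnitalSubring R | ∃ a : R, S = NonUnitalSubring.closure {a}} with h𝒮
  -- pigeonhole on closures of 2-power powers of c
  have : Finite ↥𝒮 := hfin.to_subtype
  obtain ⟨k0, l0, hkl, hF⟩ := Finite.exists_ne_map_eq_of_infinite
    (fun k : ℕ => (⟨NonUnitalSubring.closure {pw c (2^k - 1)}, ⟨_, rfl⟩⟩ : ↥𝒮))
  have hcl : ∀ k l : ℕ, k < l →
      NonUnitalSubring.closure {pw c (2^k - 1)} = NonUnitalSubring.closure {pw c (2^l - 1)} →
      ∃ u ∈ sp (pw c (2^k - 1)), pw c (2^k - 1) * u = pw c (2^k - 1) := by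
    intro k l hlt heq
    set b := pw c (2^k - 1) with hb_def
    -- b ∈ sp (pw c (2^l - 1))
    have h1 : b ∈ sp (pw c (2^l - 1)) := by
      have : b ∈ (NonUnitalSubring.closure {b} : Set R) := NonUnitalSubring.subset_closure rfl
      rw [heq, closure_eq_sp] at this
      exact this
    -- pw c (2^l -1) = pw (pw b 1) (2^(l-k-1) - 1)
    have hbb : pw b 1 = pw c (2^(k+1) - 1) := by
      rw [hb_def, pw_pw]
      congr 1
      have h2 : 1 ≤ 2^k := Nat.one_le_two_pow
      have h3 : 2^(k+1) = 2^k * 2 := by rw [pow_succ]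
      omega
    have hlk : pw c (2^l - 1) = pw (pw b 1) (2^(l-k-1) - 1) := by
      rw [hbb, pw_pw]
      congr 1
      have h2 : 1 ≤ 2^(k+1) := Nat.one_le_two_pow
      have h3 : 1 ≤ 2^(l-k-1) := Nat.one_le_two_pow
      have h4 : 2^(k+1) * 2^(l-k-1) = 2^l := by
        rw [← pow_add]
        congr 1
        omega
      have h5 : (2^(k+1) - 1 + 1) * (2^(l-k-1) - 1 + 1) = 2^(k+1) * 2^(l-k-1) := by
        congr 1 <;> omega
      omega
    have h2 : b ∈ sp (pw b 1) := by
      refine sp_pw_le (pw b 1) (2^(l-k-1) - 1) ?_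
      rw [← hlk]
      exact h1
    exact exists_unit b h2
  -- organize k < l
  obtain ⟨u, hu_spb, hub⟩ : ∃ u ∈ sp (pw c (2^(min k0 l0) - 1)),
      pw c (2^(min k0 l0) - 1) * u = pw c (2^(min k0 l0) - 1) := by
    have heq := Subtype.ext_iff.1 hF
    simp only at heq
    rcases Ne.lt_or_gt hkl with h | h
    · rw [min_eq_left h.le]
      exact hcl k0 l0 h heq
    · rw [min_eq_right h.le]
      exact hcl l0 k0 h heq.symm
  generalize hK_def : 2^(min k0 l0) - 1 = K at hu_spb hub
  -- facts about u
  have hu_z : ∀ z ∈ sp (pw c K), z * u = z := by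
    have hu_pw : ∀ j, pw (pw c K) j * u = pw (pw c K) j := by
      intro j
      induction j with
      | zero => exact hub
      | succ j ih =>
          rw [pw_succ, mul_assoc, sp_comm (self_mem_sp (pw c K)) hu_spb, ← mul_assoc, ih]
    intro z hz
    induction hz using Submodule.span_induction with
    | mem y hy => obtain ⟨j, rfl⟩ := hy; exact hu_pw j
    | zero => rw [zero_mul]
    | add y z _ _ h1 h2 => rw [add_mul, h1, h2]
    | smul kk y _ h1 => rw [smul_mul_assoc, h1]
  have huu : u * u = u := hu_z u hu_spb
  have hu_c : u ∈ sp c := sp_pw_le c K hu_spb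
  have hb_c : pw c K ∈ sp c := pw_mem_sp c K
  have hub' : u * pw c K = pw c K := by rw [sp_comm hu_c hb_c, hub]
  have hu_pwc : ∀ j, K ≤ j → u * pw c j = pw c j := by
    intro j hj
    rcases eq_or_lt_of_le hj with rfl | hlt2
    · exact hub'
    · have hsplit : pw c j = pw c K * pw c (j - K - 1) := by
        rw [← pw_add]
        congr 1
        omega
      rw [hsplit, ← mul_assoc, hub']
  set t := u * c with ht_def
  have hpwt : ∀ j, pw t j = u * pw c j := by
    intro j
    induction j with
    | zero => rfl
    | succ j ih =>
        rw [pw_succ, ih, pw_succ, mul_assoc, ← mul_assoc (pw c j) u c,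
          sp_comm (pw_mem_sp c j) hu_c, mul_assoc u (pw c j) c, ← mul_assoc u u _, huu]
  have hpwt_spc : ∀ j, pw t j ∈ sp c := by
    intro j
    rw [hpwt]
    exact sp_mul_mem hu_c (pw_mem_sp c j)
  have hsp_t : sp t = Submodule.map (mulL u) (sp c) := by
    apply le_antisymm
    · apply Submodule.span_le.2
      rintro x ⟨j, rfl⟩
      exact ⟨pw c j, pw_mem_sp c j, (hpwt j).symm⟩
    · rw [sp]
      rw [Submodule.map_span]
      apply Submodule.span_le.2
      rintro x ⟨y, ⟨j, rfl⟩, rfl⟩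
      show u * pw c j ∈ sp t
      rw [← hpwt]
      exact pw_mem_sp t j
  -- the complementary part c'
  set c' := c - u * c with hc'_def
  have hπmul : ∀ x ∈ sp c, ∀ y ∈ sp c,
      (x - u*x) * (y - u*y) = (x*y) - u*(x*y) := by
    intro x hx y hy
    have h1 : x * (u*y) = u * (x*y) := by
      rw [← mul_assoc, sp_comm hx hu_c, mul_assoc]
    have h2 : (u*x) * y = u * (x*y) := by rw [mul_assoc]
    have h3 : (u*x) * (u*y) = u * (x*y) := by
      rw [mul_assoc, h1, ← mul_assoc, huu]
    rw [sub_mul, mul_sub, mul_sub, h1, h2, h3]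
    abel
  have hpwc' : ∀ j, pw c' j = pw c j - u * pw c j := by
    intro j
    induction j with
    | zero => rfl
    | succ j ih =>
        rw [pw_succ, ih, pw_succ]
        exact hπmul (pw c j) (pw_mem_sp c j) c (self_mem_sp c)
  have hnil : ∀ j, K ≤ j → pw c' j = 0 := by
    intro j hj
    rw [hpwc', hu_pwc j hj, sub_self]
  have htor' : (m:ℤ) • c' ∈ spt c' 1 := by
    have hmap2 : ∀ x ∈ spt c 1, x - u*x ∈ spt c' 1 := by
      intro x hx
      induction hx using Submodule.span_induction with
      | mem y hy =>
          obtain ⟨i, rfl⟩ := hy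
          show pw c (i+1) - u * pw c (i+1) ∈ spt c' 1
          rw [← hpwc']
          exact pw_mem_spt c' (by omega)
      | zero => rw [mul_zero, sub_zero]; exact zero_mem _
      | add y z _ _ h1 h2 =>
          have : y + z - u * (y + z) = (y - u*y) + (z - u*z) := by rw [mul_add]; abel
          rw [this]; exact add_mem h1 h2
      | smul kk y _ h1 =>
          have : kk • y - u * (kk • y) = kk • (y - u*y) := by
            rw [mul_smul_comm, smul_sub]
          rw [this]; exact Submodule.smul_mem _ kk h1
    have : (m:ℤ) • c' = (m:ℤ) • c - u * ((m:ℤ) • c) := by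
      rw [hc'_def, smul_sub, mul_smul_comm]
    rw [this]
    exact hmap2 _ hmc
  have hKfin : ((sp c' : Submodule ℤ R) : Set R).Finite :=
    nt_finite c' K hnil m hm htor'
  -- sp t is infinite
  have hπle : ∀ z ∈ sp c, z - u*z ∈ sp c' := by
    intro z hz
    induction hz using Submodule.span_induction with
    | mem y hy =>
        obtain ⟨j, rfl⟩ := hy
        rw [← hpwc']
        exact pw_mem_sp c' j
    | zero => rw [mul_zero, sub_zero]; exact zero_mem _
    | add y z _ _ h1 h2 =>
        have : y + z - u * (y + z) = (y - u*y) + (z - u*z) := by rw [mul_add]; abel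
        rw [this]; exact add_mem h1 h2
    | smul kk y _ h1 =>
        have : kk • y - u * (kk • y) = kk • (y - u*y) := by rw [mul_smul_comm, smul_sub]
        rw [this]; exact Submodule.smul_mem _ kk h1
  have hEinf : ((sp t : Submodule ℤ R) : Set R).Infinite := by
    by_contra hfin2
    rw [Set.not_infinite] at hfin2
    apply hc
    apply Set.Finite.subset (Set.Finite.image2 (fun x y => x + y) hfin2 hKfin)
    intro z hz
    have h1 : u * z ∈ sp t := by
      rw [hsp_t]
      exact ⟨z, hz, rfl⟩
    have h3 : z = u * z + (z - u * z) := by abel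
    rw [h3]
    exact Set.mem_image2_of_mem (f := fun x y => x + y) h1 (hπle z hz)
  -- the unital generator system w
  set w : ℕ → R := fun j => Nat.rec u (fun i _ => pw t i) j with hw_def
  have hw0 : w 0 = u := rfl
  have hws : ∀ i, w (i+1) = pw t i := fun i => rfl
  have hw_mul : ∀ i j, w i * w j = w (i + j) := by
    have hupt : ∀ j, u * pw t j = pw t j := by
      intro j
      rw [hpwt j, ← mul_assoc, huu]
    intro i j
    cases i with
    | zero =>
        cases j with
        | zero => rw [Nat.add_zero]; exact huu
        | succ j => rw [Nat.zero_add, hw0, hws]; exact hupt j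
    | succ i =>
        cases j with
        | zero => rw [Nat.add_zero, hw0, hws, sp_comm (hpwt_spc i) hu_c]; exact hupt i
        | succ j =>
            rw [show i+1+(j+1) = (i+j+1)+1 from by omega, hws, hws, hws,
              show i+j+1 = i + j + 1 from rfl, pw_add]
  -- torsion or not for u
  by_cases hχ : ∃ χ : ℕ, 0 < χ ∧ (χ:ℤ) • u = 0
  · obtain ⟨χ, hχpos, hχu⟩ := hχ
    by_cases hCp : ∃ p : ℕ, p.Prime ∧
        ∀ f : ℕ →₀ ℤ, (f.sum fun j kk => kk • w j) = 0 → ∀ j, (p:ℤ) ∣ f j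
    · -- powers of t give infinitely many subrings
      obtain ⟨p, hp, hPind⟩ := hCp
      have hkey : ∀ k l : ℕ, k < l →
          NonUnitalSubring.closure {pw t k} = NonUnitalSubring.closure {pw t l} → False := by
        intro k l hklt heq
        have h1 : pw t k ∈ sp (pw t l) := by
          have : pw t k ∈ (NonUnitalSubring.closure {pw t k} : Set R) :=
            NonUnitalSubring.subset_closure rfl
          rw [heq, closure_eq_sp] at this
          exact this
        obtain ⟨f, hf⟩ := mem_sp_iff.1 h1
        have hgi : Function.Injective (fun i : ℕ => (l+1)*(i+1)) := by
          intro i i' hii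
          simp only [] at hii
          have := Nat.eq_of_mul_eq_mul_left (show 0 < l+1 by omega) hii
          omega
        have hsum2 : (f.sum fun i kk => kk • w ((l+1)*(i+1))) = w (k+1) := by
          rw [hws]
          rw [← hf]
          apply Finsupp.sum_congr
          intro i _
          congr 1
          rw [pw_pw]
          rw [show (l+1)*(i+1) = ((l+1)*(i+1) - 1) + 1 from by
            have : 1 ≤ (l+1)*(i+1) := Nat.one_le_iff_ne_zero.2 (by positivity)
            omega]
          rw [hws, Nat.add_sub_cancel]
        set F := Finsupp.mapDomain (fun i : ℕ => (l+1)*(i+1)) f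
            - Finsupp.single (k+1) (1:ℤ) with hF_def2
        have hFsum : (F.sum fun j kk => kk • w j) = 0 := by
          rw [hF_def2, Finsupp.sum_sub_index (fun a b1 b2 => sub_smul b1 b2 (w a)),
            Finsupp.sum_mapDomain_index_inj hgi,
            Finsupp.sum_single_index (zero_smul ℤ (w (k+1)))]
          rw [one_smul]
          rw [hsum2, sub_self]
        have hdvd := hPind F hFsum (k+1)
        have hFk : F (k+1) = -1 := by
          rw [hF_def2, Finsupp.sub_apply, Finsupp.single_eq_same]
          rw [Finsupp.mapDomain_notin_range]
          · ring
          · rintro ⟨i, hi⟩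
            simp only [] at hi
            have h5 : l+1 ≤ (l+1)*(i+1) := Nat.le_mul_of_pos_right _ (by omega)
            omega
        rw [hFk] at hdvd
        have h6 : (p:ℤ) ∣ 1 := (dvd_neg).1 hdvd
        have h7 := Int.le_of_dvd one_pos h6
        have h8 := hp.two_le
        omega
      apply (Set.not_infinite.2 hfin)
      refine Set.infinite_of_injective_forall_mem
        (f := fun k : ℕ => NonUnitalSubring.closure {pw t k}) ?_ ?_
      · intro k l h
        by_contra hne
        rcases lt_or_gt_of_ne hne with h2 | h2
        · exact hkey k l h2 h
        · exact hkey l k h2 h.symm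
      · intro k; exact ⟨pw t k, rfl⟩
    · -- no prime works: everything is finite, contradiction
      push_neg at hCp
      have hH : ∀ p : ℕ, p.Prime → p ∣ χ →
          ∃ f : ℕ →₀ ℤ, (∃ j, ¬ (p:ℤ) ∣ f j) ∧ (f.sum fun j kk => kk • (w j * u)) = 0 := by
        intro p hp _
        obtain ⟨f, hf0, j, hj⟩ := hCp p hp
        refine ⟨f, ⟨j, hj⟩, ?_⟩
        rw [← hf0]
        apply Finsupp.sum_congr
        intro i _
        congr 1
        have := hw_mul i 0
        rw [Nat.add_zero] at this
        rw [← hw0]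
        exact this
      have hMI := mi w hw_mul χ hχpos u hχu hH
      apply hEinf
      apply Set.Finite.subset hMI
      intro z hz
      have hle2 : sp t ≤ Submodule.span ℤ (Set.range fun j => w j * u) := by
        apply Submodule.span_le.2
        rintro x ⟨j, rfl⟩
        apply Submodule.subset_span
        refine ⟨j+1, ?_⟩
        show w (j+1) * u = pw t j
        have h9 := hw_mul (j+1) 0
        rw [Nat.add_zero] at h9
        rw [← hw0, h9, hws]
      exact hle2 hz
  · -- u has infinite additive order
    push_neg at hχ
    have hzero : ∀ kk : ℤ, kk • u = 0 → kk = 0 := by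
      intro kk hkk
      by_contra hne
      rcases lt_trichotomy kk 0 with h | h | h
      · refine hχ (-kk).toNat (by omega) ?_
        rw [show (((-kk).toNat : ℤ)) = -kk from by omega, neg_smul, hkk, neg_zero]
      · exact hne h
      · refine hχ kk.toNat (by omega) ?_
        rw [show ((kk.toNat : ℤ)) = kk from by omega, hkk]
    have hpwu : ∀ i, pw u i = u := by
      intro i
      induction i with
      | zero => rfl
      | succ i ih => rw [pw_succ, ih, huu]
    have hsple : ∀ n : ℕ, sp ((n:ℤ) • u) ≤ Submodule.span ℤ {(n:ℤ) • u} := by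
      intro n
      apply Submodule.span_le.2
      rintro x ⟨i, rfl⟩
      rw [pw_smul, hpwu]
      rw [show ((n:ℤ))^(i+1) • u = ((n:ℤ))^i • ((n:ℤ) • u) from by rw [smul_smul, ← pow_succ]]
      exact Submodule.smul_mem _ _ (Submodule.subset_span rfl)
    have hkey : ∀ n n' : ℕ,
        NonUnitalSubring.closure {((n+1:ℕ):ℤ) • u} = NonUnitalSubring.closure {((n'+1:ℕ):ℤ) • u} →
        ((n+1:ℕ):ℤ) ∣ ((n'+1:ℕ):ℤ) := by
      intro n n' heq
      have h1 : ((n'+1:ℕ):ℤ) • u ∈ sp (((n+1:ℕ):ℤ) • u) := by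
        have : ((n'+1:ℕ):ℤ) • u ∈ (NonUnitalSubring.closure {((n'+1:ℕ):ℤ) • u} : Set R) :=
          NonUnitalSubring.subset_closure rfl
        rw [← heq, closure_eq_sp] at this
        exact this
      obtain ⟨j, hj⟩ := Submodule.mem_span_singleton.1 (hsple (n+1) h1)
      have h2 : (((n'+1:ℕ):ℤ) - j * ((n+1:ℕ):ℤ)) • u = 0 := by
        rw [sub_smul, mul_smul, hj, sub_self]
      have h3 := hzero _ h2
      exact ⟨j, by linarith⟩
    apply (Set.not_infinite.2 hfin)
    refine Set.infinite_of_injective_forall_mem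
      (f := fun n : ℕ => NonUnitalSubring.closure {((n+1:ℕ):ℤ) • u}) ?_ ?_
    · intro n n' h
      have d1 := hkey n n' h
      have d2 := hkey n' n h.symm
      have := Int.dvd_antisymm (by positivity) (by positivity) d1 d2
      omega
    · intro n; exact ⟨((n+1:ℕ):ℤ) • u, rfl⟩

end OneGen

/-- Every infinite (possibly nonunital) ring has infinitely many subrings generated by
one element. -/
theorem stmt_3 (R : Type*) [NonUnitalRing R] [Infinite R] :
    {S : NonUnitalSubring R | ∃ a : R, S = NonUnitalSubring.closure {a}}.Infinite := by
  by_contra hinf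
  rw [Set.not_infinite] at hinf
  have hex : ∃ c : R, ((OneGen.sp c : Submodule ℤ R) : Set R).Infinite := by
    by_contra hall
    push_neg at hall
    have huniv : (Set.univ : Set R) ⊆
        ⋃ S ∈ {S : NonUnitalSubring R | ∃ a : R, S = NonUnitalSubring.closure {a}},
          (S : Set R) := by
      intro x _
      exact Set.mem_biUnion ⟨x, rfl⟩ (NonUnitalSubring.subset_closure rfl)
    have hfin2 : (⋃ S ∈ {S : NonUnitalSubring R | ∃ a : R, S = NonUnitalSubring.closure {a}},
        (S : Set R)).Finite := by
      apply Set.Finite.biUnion hinf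
      intro S hS
      obtain ⟨c, rfl⟩ := hS
      rw [OneGen.closure_eq_sp]
      exact hall c
    exact Set.infinite_univ (α := R) (hfin2.subset huniv)
  obtain ⟨c, hc⟩ := hex
  by_cases hA : ∃ m : ℕ, 0 < m ∧ (m:ℤ) • c ∈ OneGen.spt c 1
  · obtain ⟨m, hm, hmc⟩ := hA
    exact OneGen.caseB hinf c hc m hm hmc
  · push_neg at hA
    exact (Set.not_infinite.2 hinf) (OneGen.caseA c hA)
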